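/- arXiv:1204.2042 — 5 statements merged into one kernel-verified Lean document; each statement's English description precedes it below -/
import Mathlib

section
/- Let q be a primitive nth root of unity in ℂ with n ≥ 2. In the ℂ-algebra H generated by D₁, D₂, σ, σ⁻¹ subject to D₁D₂ = D₂D₁, qσDᵢ = Dᵢσ (i = 1,2), and σσ⁻¹ = σ⁻¹σ = 1, the two-sided ideal I generated by D₁ⁿ and D₂ⁿ is a Hopf ideal with respect to the Hopf structure where Δ(D₁) = D₁⊗σ + 1⊗D₁, Δ(D₂) = D₂⊗1 + σ⊗D₂, Δ(σ) = σ⊗σ; that is, Δ(I) ⊆ I⊗H + H⊗I, ε(I) = 0, and S(I) ⊆ I. -/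
open TensorProduct Coalgebra HopfAlgebra Finset

section AntipodeMul

variable {R : Type*} {A : Type*} [CommRing R] [Ring A] [HopfAlgebra R A]

/-- The product of two representations is a representation of the product. -/
noncomputable def mulRepr {ι κ : Type*} (u v : A) (ru : Coalgebra.Repr R u ι) (rv : Coalgebra.Repr R v κ) :
    Coalgebra.Repr R (u * v) (ι × κ) where
  index := ru.index ×ˢ rv.index
  left p := ru.left p.1 * rv.left p.2
  right p := ru.right p.1 * rv.right p.2
  eq := by
    rw [Finset.sum_product]
    show _ = Coalgebra.comul (R := R) (u * v)
    rw [Bialgebra.comul_mul, ← ru.eq, ← rv.eq, Finset.sum_mul_sum]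
    simp only [Algebra.TensorProduct.tmul_mul_tmul]

lemma sum_counit_left_smul {ι : Type*} {a : A} (r : Coalgebra.Repr R a ι) :
    ∑ i ∈ r.index, Coalgebra.counit (R := R) (r.left i) • r.right i = a := by
  have h2 := congrArg (TensorProduct.lid R A) (Coalgebra.sum_counit_tmul_eq (R := R) r)
  rw [map_sum] at h2
  simp only [TensorProduct.lid_tmul, one_smul] at h2
  exact h2

lemma sum_counit_right_smul {ι : Type*} {a : A} (r : Coalgebra.Repr R a ι) :
    ∑ i ∈ r.index, Coalgebra.counit (R := R) (r.right i) • r.left i = a := by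
  have h2 := congrArg (TensorProduct.rid R A) (Coalgebra.sum_tmul_counit_eq (R := R) r)
  rw [map_sum] at h2
  simp only [TensorProduct.rid_tmul, one_smul] at h2
  exact h2

/-- multiply three tensor factors -/
noncomputable def mul3 : A ⊗[R] (A ⊗[R] A) →ₗ[R] A :=
  LinearMap.mul' R A ∘ₗ LinearMap.lTensor A (LinearMap.mul' R A)

@[simp] lemma mul3_apply (x y z : A) : (mul3 (R := R)) (x ⊗ₜ[R] (y ⊗ₜ[R] z)) = x * (y * z) := by
  simp [mul3]

/-- apply three maps and multiply -/
noncomputable def tri (f g h : A →ₗ[R] A) : A ⊗[R] (A ⊗[R] A) →ₗ[R] A :=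
  mul3 ∘ₗ TensorProduct.map f (TensorProduct.map g h)

@[simp] lemma tri_apply (f g h : A →ₗ[R] A) (x y z : A) :
    tri f g h (x ⊗ₜ[R] (y ⊗ₜ[R] z)) = f x * (g y * h z) := by
  simp [tri]

theorem antipode_mul_rev (a b : A) :
    antipode (R := R) (a * b) = antipode (R := R) b * antipode (R := R) a := by
  classical
  set S : A →ₗ[R] A := antipode (R := R) with hS
  set ra : Coalgebra.Repr R a (A × A) := Coalgebra.Repr.arbitrary R a with hra
  set rb : Coalgebra.Repr R b (A × A) := Coalgebra.Repr.arbitrary R b with hrb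
  set σa : ∀ i : (A × A), Coalgebra.Repr R (ra.left i) (A × A) :=
    fun i => Coalgebra.Repr.arbitrary R (ra.left i) with hσa
  set τa : ∀ i : (A × A), Coalgebra.Repr R (ra.right i) (A × A) :=
    fun i => Coalgebra.Repr.arbitrary R (ra.right i) with hτa
  set σb : ∀ j : (A × A), Coalgebra.Repr R (rb.left j) (A × A) :=
    fun j => Coalgebra.Repr.arbitrary R (rb.left j) with hσb
  set τb : ∀ j : (A × A), Coalgebra.Repr R (rb.right j) (A × A) :=
    fun j => Coalgebra.Repr.arbitrary R (rb.right j) with hτb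
  have Eq_a := Coalgebra.sum_tmul_tmul_eq (R := R) ra σa τa
  have Eq_b := Coalgebra.sum_tmul_tmul_eq (R := R) rb σb τb
  -- step 1 : switch the legs of `a`
  have step1 : ∀ (j : (A × A)) (l : (A × A)),
      (∑ i ∈ ra.index, ∑ k ∈ (σa i).index,
        S ((σa i).left k * (σb j).left l) *
          (((σa i).right k * (σb j).right l) * (S (rb.right j) * S (ra.right i)))) =
      ∑ i ∈ ra.index, ∑ k ∈ (τa i).index,
        S (ra.left i * (σb j).left l) *
          (((τa i).left k * (σb j).right l) * (S (rb.right j) * S ((τa i).right k))) := by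
    intro j l
    have h := congrArg (tri (S ∘ₗ LinearMap.mulRight R ((σb j).left l))
      (LinearMap.mulRight R ((σb j).right l))
      (LinearMap.mulLeft R (S (rb.right j)) ∘ₗ S)) Eq_a
    simpa only [map_sum, tri_apply, LinearMap.comp_apply, LinearMap.mulRight_apply,
      LinearMap.mulLeft_apply] using h
  -- step 2 : switch the legs of `b`
  have step2 : ∀ (i : (A × A)) (k : (A × A)),
      (∑ j ∈ rb.index, ∑ l ∈ (σb j).index,
        S (ra.left i * (σb j).left l) *
          (((τa i).left k * (σb j).right l) * (S (rb.right j) * S ((τa i).right k)))) =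
      ∑ j ∈ rb.index, ∑ l ∈ (τb j).index,
        S (ra.left i * rb.left j) *
          (((τa i).left k * (τb j).left l) * (S ((τb j).right l) * S ((τa i).right k))) := by
    intro i k
    have h := congrArg (tri (S ∘ₗ LinearMap.mulLeft R (ra.left i))
      (LinearMap.mulLeft R ((τa i).left k))
      (LinearMap.mulRight R (S ((τa i).right k)) ∘ₗ S)) Eq_b
    simpa only [map_sum, tri_apply, LinearMap.comp_apply, LinearMap.mulRight_apply,
      LinearMap.mulLeft_apply] using h
  -- evaluation of the left end
  have evalA : (∑ j ∈ rb.index, ∑ l ∈ (σb j).index, ∑ i ∈ ra.index, ∑ k ∈ (σa i).index,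
        S ((σa i).left k * (σb j).left l) *
          (((σa i).right k * (σb j).right l) * (S (rb.right j) * S (ra.right i)))) =
      S b * S a := by
    have inner : ∀ (j : (A × A)) (i : (A × A)),
        (∑ k ∈ (σa i).index, ∑ l ∈ (σb j).index,
          S ((σa i).left k * (σb j).left l) *
            (((σa i).right k * (σb j).right l) * (S (rb.right j) * S (ra.right i)))) =
        (Coalgebra.counit (R := R) (ra.left i) * Coalgebra.counit (R := R) (rb.left j)) •
          (S (rb.right j) * S (ra.right i)) := by
      intro j i
      have h := HopfAlgebra.sum_antipode_mul_eq_smul (R := R)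
        (mulRepr (ra.left i) (rb.left j) (σa i) (σb j))
      simp only [mulRepr] at h
      rw [Finset.sum_product] at h
      dsimp only at h
      calc (∑ k ∈ (σa i).index, ∑ l ∈ (σb j).index,
              S ((σa i).left k * (σb j).left l) *
                (((σa i).right k * (σb j).right l) * (S (rb.right j) * S (ra.right i))))
          = (∑ k ∈ (σa i).index, ∑ l ∈ (σb j).index,
              S ((σa i).left k * (σb j).left l) *
                ((σa i).right k * (σb j).right l)) * (S (rb.right j) * S (ra.right i)) := by
            rw [Finset.sum_mul]
            refine Finset.sum_congr rfl fun k _ => ?_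
            rw [Finset.sum_mul]
            exact Finset.sum_congr rfl fun l _ => by simp only [mul_assoc]
        _ = (Coalgebra.counit (R := R) (ra.left i) * Coalgebra.counit (R := R) (rb.left j)) •
              (S (rb.right j) * S (ra.right i)) := by
            rw [h, Bialgebra.counit_mul, smul_mul_assoc, one_mul]
    have hb : (∑ j ∈ rb.index, Coalgebra.counit (R := R) (rb.left j) • S (rb.right j)) =
        S b := by
      have h1 : (∑ j ∈ rb.index, Coalgebra.counit (R := R) (rb.left j) • S (rb.right j)) =
          S (∑ j ∈ rb.index, Coalgebra.counit (R := R) (rb.left j) • rb.right j) := by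
        rw [map_sum]
        exact Finset.sum_congr rfl fun j _ => (map_smul S _ _).symm
      rw [h1, sum_counit_left_smul]
    have ha : (∑ i ∈ ra.index, Coalgebra.counit (R := R) (ra.left i) • S (ra.right i)) =
        S a := by
      have h1 : (∑ i ∈ ra.index, Coalgebra.counit (R := R) (ra.left i) • S (ra.right i)) =
          S (∑ i ∈ ra.index, Coalgebra.counit (R := R) (ra.left i) • ra.right i) := by
        rw [map_sum]
        exact Finset.sum_congr rfl fun i _ => (map_smul S _ _).symm
      rw [h1, sum_counit_left_smul]
    calc (∑ j ∈ rb.index, ∑ l ∈ (σb j).index, ∑ i ∈ ra.index, ∑ k ∈ (σa i).index,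
            S ((σa i).left k * (σb j).left l) *
              (((σa i).right k * (σb j).right l) * (S (rb.right j) * S (ra.right i))))
        = ∑ j ∈ rb.index, ∑ i ∈ ra.index, ∑ k ∈ (σa i).index, ∑ l ∈ (σb j).index,
            S ((σa i).left k * (σb j).left l) *
              (((σa i).right k * (σb j).right l) * (S (rb.right j) * S (ra.right i))) := by
          refine Finset.sum_congr rfl fun j _ => ?_
          rw [Finset.sum_comm]
          exact Finset.sum_congr rfl fun i _ => Finset.sum_comm
      _ = ∑ j ∈ rb.index, ∑ i ∈ ra.index,
            (Coalgebra.counit (R := R) (ra.left i) * Coalgebra.counit (R := R) (rb.left j)) •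
              (S (rb.right j) * S (ra.right i)) :=
          Finset.sum_congr rfl fun j _ => Finset.sum_congr rfl fun i _ => inner j i
      _ = (∑ j ∈ rb.index, Coalgebra.counit (R := R) (rb.left j) • S (rb.right j)) *
            (∑ i ∈ ra.index, Coalgebra.counit (R := R) (ra.left i) • S (ra.right i)) := by
          rw [Finset.sum_mul_sum]
          refine Finset.sum_congr rfl fun j _ => Finset.sum_congr rfl fun i _ => ?_
          rw [smul_mul_smul_comm, mul_comm (Coalgebra.counit (R := R) (rb.left j))]
      _ = S b * S a := by rw [hb, ha]
  -- evaluation of the right end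
  have evalB : (∑ i ∈ ra.index, ∑ k ∈ (τa i).index, ∑ j ∈ rb.index, ∑ l ∈ (τb j).index,
        S (ra.left i * rb.left j) *
          (((τa i).left k * (τb j).left l) * (S ((τb j).right l) * S ((τa i).right k)))) =
      S (a * b) := by
    have inner : ∀ (i : (A × A)) (j : (A × A)),
        (∑ k ∈ (τa i).index, ∑ l ∈ (τb j).index,
          S (ra.left i * rb.left j) *
            (((τa i).left k * (τb j).left l) * (S ((τb j).right l) * S ((τa i).right k)))) =
        (Coalgebra.counit (R := R) (ra.right i) * Coalgebra.counit (R := R) (rb.right j)) •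
          S (ra.left i * rb.left j) := by
      intro i j
      have hbj := HopfAlgebra.sum_mul_antipode_eq_smul (R := R) (τb j)
      have hai := HopfAlgebra.sum_mul_antipode_eq_smul (R := R) (τa i)
      have hkl : ∀ k, (∑ l ∈ (τb j).index,
          ((τa i).left k * (τb j).left l) * (S ((τb j).right l) * S ((τa i).right k))) =
          Coalgebra.counit (R := R) (rb.right j) • ((τa i).left k * S ((τa i).right k)) := by
        intro k
        have h2 : ∀ l, ((τa i).left k * (τb j).left l) * (S ((τb j).right l) * S ((τa i).right k))
            = (τa i).left k * (((τb j).left l * S ((τb j).right l)) * S ((τa i).right k)) := by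
          intro l
          simp only [mul_assoc]
        rw [Finset.sum_congr rfl fun l _ => h2 l, ← Finset.mul_sum, ← Finset.sum_mul, hbj,
          smul_mul_assoc, one_mul, mul_smul_comm]
      calc (∑ k ∈ (τa i).index, ∑ l ∈ (τb j).index,
              S (ra.left i * rb.left j) *
                (((τa i).left k * (τb j).left l) * (S ((τb j).right l) * S ((τa i).right k))))
          = ∑ k ∈ (τa i).index, S (ra.left i * rb.left j) *
              (Coalgebra.counit (R := R) (rb.right j) •
                ((τa i).left k * S ((τa i).right k))) := by
            refine Finset.sum_congr rfl fun k _ => ?_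
            rw [← Finset.mul_sum, hkl k]
        _ = (Coalgebra.counit (R := R) (ra.right i) * Coalgebra.counit (R := R) (rb.right j)) •
              S (ra.left i * rb.left j) := by
            rw [← Finset.mul_sum, ← Finset.smul_sum, hai, smul_smul, mul_smul_comm, mul_one,
              mul_comm (Coalgebra.counit (R := R) (rb.right j))]
    have hab : (∑ i ∈ ra.index, ∑ j ∈ rb.index,
        (Coalgebra.counit (R := R) (ra.right i) * Coalgebra.counit (R := R) (rb.right j)) •
          S (ra.left i * rb.left j)) = S (a * b) := by
      have h1 : ∀ (i : (A × A)) (j : (A × A)),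
          (Coalgebra.counit (R := R) (ra.right i) * Coalgebra.counit (R := R) (rb.right j)) •
            S (ra.left i * rb.left j) =
          S ((Coalgebra.counit (R := R) (ra.right i) • ra.left i) *
            (Coalgebra.counit (R := R) (rb.right j) • rb.left j)) := by
        intro i j
        rw [smul_mul_smul_comm, map_smul]
      calc (∑ i ∈ ra.index, ∑ j ∈ rb.index,
              (Coalgebra.counit (R := R) (ra.right i) *
                Coalgebra.counit (R := R) (rb.right j)) • S (ra.left i * rb.left j))
          = S (∑ i ∈ ra.index, ∑ j ∈ rb.index,
              (Coalgebra.counit (R := R) (ra.right i) • ra.left i) *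
              (Coalgebra.counit (R := R) (rb.right j) • rb.left j)) := by
            rw [map_sum]
            refine Finset.sum_congr rfl fun i _ => ?_
            rw [map_sum]
            exact Finset.sum_congr rfl fun j _ => h1 i j
        _ = S ((∑ i ∈ ra.index, Coalgebra.counit (R := R) (ra.right i) • ra.left i) *
              (∑ j ∈ rb.index, Coalgebra.counit (R := R) (rb.right j) • rb.left j)) := by
            rw [Finset.sum_mul_sum]
        _ = S (a * b) := by rw [sum_counit_right_smul, sum_counit_right_smul]
    calc (∑ i ∈ ra.index, ∑ k ∈ (τa i).index, ∑ j ∈ rb.index, ∑ l ∈ (τb j).index,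
            S (ra.left i * rb.left j) *
              (((τa i).left k * (τb j).left l) * (S ((τb j).right l) * S ((τa i).right k))))
        = ∑ i ∈ ra.index, ∑ j ∈ rb.index, ∑ k ∈ (τa i).index, ∑ l ∈ (τb j).index,
            S (ra.left i * rb.left j) *
              (((τa i).left k * (τb j).left l) * (S ((τb j).right l) * S ((τa i).right k))) :=
          Finset.sum_congr rfl fun i _ => Finset.sum_comm
      _ = ∑ i ∈ ra.index, ∑ j ∈ rb.index,
            (Coalgebra.counit (R := R) (ra.right i) * Coalgebra.counit (R := R) (rb.right j)) •
              S (ra.left i * rb.left j) :=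
          Finset.sum_congr rfl fun i _ => Finset.sum_congr rfl fun j _ => inner i j
      _ = S (a * b) := hab
  -- chain everything together
  have mid : (∑ j ∈ rb.index, ∑ l ∈ (σb j).index, ∑ i ∈ ra.index, ∑ k ∈ (σa i).index,
        S ((σa i).left k * (σb j).left l) *
          (((σa i).right k * (σb j).right l) * (S (rb.right j) * S (ra.right i)))) =
      ∑ i ∈ ra.index, ∑ k ∈ (τa i).index, ∑ j ∈ rb.index, ∑ l ∈ (τb j).index,
        S (ra.left i * rb.left j) *
          (((τa i).left k * (τb j).left l) * (S ((τb j).right l) * S ((τa i).right k))) := by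
    calc (∑ j ∈ rb.index, ∑ l ∈ (σb j).index, ∑ i ∈ ra.index, ∑ k ∈ (σa i).index,
            S ((σa i).left k * (σb j).left l) *
              (((σa i).right k * (σb j).right l) * (S (rb.right j) * S (ra.right i))))
        = ∑ j ∈ rb.index, ∑ l ∈ (σb j).index, ∑ i ∈ ra.index, ∑ k ∈ (τa i).index,
            S (ra.left i * (σb j).left l) *
              (((τa i).left k * (σb j).right l) * (S (rb.right j) * S ((τa i).right k))) :=
          Finset.sum_congr rfl fun j _ => Finset.sum_congr rfl fun l _ => step1 j l
      _ = ∑ i ∈ ra.index, ∑ k ∈ (τa i).index, ∑ j ∈ rb.index, ∑ l ∈ (σb j).index,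
            S (ra.left i * (σb j).left l) *
              (((τa i).left k * (σb j).right l) * (S (rb.right j) * S ((τa i).right k))) := by
          calc _ = ∑ j ∈ rb.index, ∑ i ∈ ra.index, ∑ k ∈ (τa i).index, ∑ l ∈ (σb j).index,
                S (ra.left i * (σb j).left l) *
                  (((τa i).left k * (σb j).right l) *
                    (S (rb.right j) * S ((τa i).right k))) := by
                refine Finset.sum_congr rfl fun j _ => ?_
                rw [Finset.sum_comm]
                exact Finset.sum_congr rfl fun i _ => Finset.sum_comm
            _ = ∑ i ∈ ra.index, ∑ j ∈ rb.index, ∑ k ∈ (τa i).index, ∑ l ∈ (σb j).index,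
                S (ra.left i * (σb j).left l) *
                  (((τa i).left k * (σb j).right l) *
                    (S (rb.right j) * S ((τa i).right k))) := Finset.sum_comm
            _ = ∑ i ∈ ra.index, ∑ k ∈ (τa i).index, ∑ j ∈ rb.index, ∑ l ∈ (σb j).index,
                S (ra.left i * (σb j).left l) *
                  (((τa i).left k * (σb j).right l) *
                    (S (rb.right j) * S ((τa i).right k))) :=
                Finset.sum_congr rfl fun i _ => Finset.sum_comm
      _ = ∑ i ∈ ra.index, ∑ k ∈ (τa i).index, ∑ j ∈ rb.index, ∑ l ∈ (τb j).index,
            S (ra.left i * rb.left j) *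
              (((τa i).left k * (τb j).left l) * (S ((τb j).right l) * S ((τa i).right k))) :=
          Finset.sum_congr rfl fun i _ => Finset.sum_congr rfl fun k _ => step2 i k
  show S (a * b) = S b * S a
  rw [← evalB, ← mid, evalA]

end AntipodeMul


open Finset

/-- geometric sum `1 + q + ... + q^(m-1)` -/
noncomputable def gsum (q : ℂ) (m : ℕ) : ℂ := ∑ i ∈ range m, q ^ i

/-- q-factorial -/
noncomputable def gfact (q : ℂ) : ℕ → ℂ
  | 0 => 1
  | m + 1 => gfact q m * gsum q (m + 1)

/-- Gaussian binomial coefficient via Pascal recursion -/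
noncomputable def gb (q : ℂ) : ℕ → ℕ → ℂ
  | _, 0 => 1
  | 0, _ + 1 => 0
  | m + 1, k + 1 => gb q m k + q ^ (k + 1) * gb q m (k + 1)

@[simp] lemma gfact_zero (q : ℂ) : gfact q 0 = 1 := rfl
lemma gfact_succ (q : ℂ) (m : ℕ) : gfact q (m + 1) = gfact q m * gsum q (m + 1) := rfl

@[simp] lemma gb_zero_right (q : ℂ) (m : ℕ) : gb q m 0 = 1 := by cases m <;> rfl

lemma gb_succ_succ (q : ℂ) (m k : ℕ) :
    gb q (m + 1) (k + 1) = gb q m k + q ^ (k + 1) * gb q m (k + 1) := rfl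

lemma gb_eq_zero_of_lt (q : ℂ) : ∀ {m k : ℕ}, m < k → gb q m k = 0 := by
  intro m
  induction m with
  | zero =>
    rintro (_ | k) hk
    · omega
    · rfl
  | succ m ih =>
    rintro (_ | k) hk
    · omega
    · rw [gb_succ_succ, ih (by omega), ih (by omega)]; ring

@[simp] lemma gb_diag (q : ℂ) : ∀ m, gb q m m = 1 := by
  intro m
  induction m with
  | zero => rfl
  | succ m ih =>
    rw [gb_succ_succ, ih, gb_eq_zero_of_lt q (by omega)]; ring

lemma gsum_add (q : ℂ) (a b : ℕ) : gsum q (a + b) = gsum q a + q ^ a * gsum q b := by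
  unfold gsum
  rw [Finset.sum_range_add, Finset.mul_sum]
  congr 1
  exact Finset.sum_congr rfl fun i _ => (pow_add q a i)

lemma gfact_mul_gb (q : ℂ) : ∀ m k j : ℕ, m = k + j →
    gfact q k * gfact q j * gb q m k = gfact q m := by
  intro m
  induction m with
  | zero =>
    rintro k j hkj
    obtain ⟨rfl, rfl⟩ : k = 0 ∧ j = 0 := by omega
    simp
  | succ m ih =>
    rintro (_ | k') j hkj
    · obtain rfl : j = m + 1 := by omega
      simp
    rcases j with _ | j'
    · obtain rfl : k' = m := by omega
      rw [gb_succ_succ, gb_eq_zero_of_lt q (Nat.lt_succ_self _), gb_diag]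
      simp
    · have h1 : gfact q k' * gfact q (j' + 1) * gb q m k' = gfact q m := ih k' (j'+1) (by omega)
      have h2 : gfact q (k' + 1) * gfact q j' * gb q m (k' + 1) = gfact q m :=
        ih (k' + 1) j' (by omega)
      have e4 : gsum q (m + 1) = gsum q (k' + 1) + q ^ (k' + 1) * gsum q (j' + 1) := by
        have h5 : m + 1 = (k' + 1) + (j' + 1) := by omega
        rw [h5, gsum_add]
      rw [gb_succ_succ, mul_add, gfact_succ q m, e4]
      calc gfact q (k' + 1) * gfact q (j' + 1) * gb q m k' +
            gfact q (k' + 1) * gfact q (j' + 1) * (q ^ (k' + 1) * gb q m (k' + 1))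
          = gsum q (k' + 1) * (gfact q k' * gfact q (j' + 1) * gb q m k') +
            (q ^ (k' + 1) * gsum q (j' + 1)) *
              (gfact q (k' + 1) * gfact q j' * gb q m (k' + 1)) := by
            rw [gfact_succ q k', gfact_succ q j']; ring
        _ = gfact q m * (gsum q (k' + 1) + q ^ (k' + 1) * gsum q (j' + 1)) := by
            rw [h1, h2]; ring

section QBinom

variable {T : Type*} [Ring T] [Algebra ℂ T]

lemma qswap_pow {q : ℂ} {A B : T} (h : B * A = q • (A * B)) :
    ∀ m, B * A ^ m = q ^ m • (A ^ m * B) := by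
  intro m
  induction m with
  | zero => simp
  | succ m ih =>
    rw [pow_succ, ← mul_assoc, ih, smul_mul_assoc, mul_assoc, h, mul_smul_comm, smul_smul,
      ← pow_succ, ← mul_assoc, ← pow_succ]

lemma qswap_pow' {q : ℂ} {A B : T} (h : B * A = q • (A * B)) :
    ∀ m, B ^ m * A = q ^ m • (A * B ^ m) := by
  intro m
  induction m with
  | zero => simp
  | succ m ih =>
    rw [pow_succ', mul_assoc, ih, mul_smul_comm, ← mul_assoc, h, smul_mul_assoc, smul_smul,
      mul_assoc, ← pow_succ', ← pow_succ]

lemma qmul_pow {q : ℂ} {A B : T} (h : B * A = q • (A * B)) (m : ℕ) :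
    ∃ d : ℂ, (A * B) ^ m = d • (A ^ m * B ^ m) := by
  induction m with
  | zero => exact ⟨1, by simp⟩
  | succ m ih =>
    obtain ⟨d, hd⟩ := ih
    refine ⟨d * q ^ m, ?_⟩
    have h1 : B ^ m * (A * B) = q ^ m • (A * B ^ (m + 1)) := by
      rw [← mul_assoc, qswap_pow' h m, smul_mul_assoc, mul_assoc, ← pow_succ]
    rw [pow_succ, hd, smul_mul_assoc, mul_assoc, h1, mul_smul_comm, smul_smul]
    congr 1
    rw [← mul_assoc, ← pow_succ]

lemma qadd_pow {q : ℂ} {A B : T} (h : B * A = q • (A * B)) (m : ℕ) :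
    (A + B) ^ m = ∑ k ∈ Finset.range (m + 1), gb q m k • (A ^ k * B ^ (m - k)) := by
  induction m with
  | zero => simp
  | succ m ih =>
    have key : (A + B) ^ (m + 1) = A * (A + B) ^ m + B * (A + B) ^ m := by
      rw [pow_succ', add_mul]
    rw [key, ih, Finset.mul_sum, Finset.mul_sum]
    have hA : ∀ k, A * (gb q m k • (A ^ k * B ^ (m - k))) =
        gb q m k • (A ^ (k + 1) * B ^ (m - k)) := by
      intro k
      rw [mul_smul_comm, ← mul_assoc, ← pow_succ']
    have hB : ∀ k, B * (gb q m k • (A ^ k * B ^ (m - k))) =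
        (gb q m k * q ^ k) • (A ^ k * B ^ (m - k + 1)) := by
      intro k
      rw [mul_smul_comm, ← mul_assoc, qswap_pow h, smul_mul_assoc, smul_smul, mul_assoc,
        ← pow_succ']
    simp only [hA, hB]
    -- second sum : peel off k = 0 and shift
    rw [Finset.sum_range_succ' (fun k => (gb q m k * q ^ k) • (A ^ k * B ^ (m - k + 1)))]
    have hshift : ∀ k ∈ Finset.range m,
        (gb q m (k + 1) * q ^ (k + 1)) • (A ^ (k + 1) * B ^ (m - (k + 1) + 1)) =
        (q ^ (k + 1) * gb q m (k + 1)) • (A ^ (k + 1) * B ^ (m - k)) := by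
      intro k hk
      rw [Finset.mem_range] at hk
      have : m - (k + 1) + 1 = m - k := by omega
      rw [this, mul_comm]
    rw [Finset.sum_congr rfl hshift]
    have hext : ∑ k ∈ Finset.range m, (q ^ (k + 1) * gb q m (k + 1)) • (A ^ (k + 1) * B ^ (m - k))
        = ∑ k ∈ Finset.range (m + 1),
            (q ^ (k + 1) * gb q m (k + 1)) • (A ^ (k + 1) * B ^ (m - k)) := by
      rw [Finset.sum_range_succ, gb_eq_zero_of_lt q (Nat.lt_succ_self m)]
      simp
    rw [hext]
    -- right-hand side: peel off k = 0 of the target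
    rw [Finset.sum_range_succ' (fun k => gb q (m + 1) k • (A ^ k * B ^ (m + 1 - k)))]
    simp only [gb_succ_succ, gb_zero_right, pow_zero, one_mul, mul_one, Nat.succ_sub_succ,
      Nat.sub_zero, add_smul]
    rw [Finset.sum_add_distrib]
    abel

lemma gsum_eq_zero {n : ℕ} {q : ℂ} (hq : IsPrimitiveRoot q n) (hn : 2 ≤ n) : gsum q n = 0 := by
  have h1 : gsum q n * (q - 1) = q ^ n - 1 := geom_sum_mul q n
  have h2 : q ^ n = 1 := hq.pow_eq_one
  have h3 : q ≠ 1 := hq.ne_one hn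
  have h4 : q - 1 ≠ 0 := sub_ne_zero.mpr h3
  have : gsum q n * (q - 1) = 0 := by rw [h1, h2]; ring
  exact (mul_eq_zero.mp this).resolve_right h4

lemma gsum_ne_zero {n : ℕ} {q : ℂ} (hq : IsPrimitiveRoot q n) {k : ℕ} (h0 : 0 < k) (hk : k < n) :
    gsum q k ≠ 0 := by
  intro hc
  have h1 : gsum q k * (q - 1) = q ^ k - 1 := geom_sum_mul q k
  rw [hc, zero_mul] at h1
  have h2 : q ^ k = 1 := by
    have := h1.symm
    rwa [sub_eq_zero] at this
  exact hq.pow_ne_one_of_pos_of_lt (by omega) hk h2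

lemma gfact_ne_zero {n : ℕ} {q : ℂ} (hq : IsPrimitiveRoot q n) : ∀ {k : ℕ}, k < n →
    gfact q k ≠ 0 := by
  intro k
  induction k with
  | zero => intro _; simp
  | succ k ih =>
    intro hk
    rw [gfact_succ]
    exact mul_ne_zero (ih (by omega)) (gsum_ne_zero hq (by omega) hk)

lemma gfact_n_eq_zero {n : ℕ} {q : ℂ} (hq : IsPrimitiveRoot q n) (hn : 2 ≤ n) :
    gfact q n = 0 := by
  obtain ⟨m, rfl⟩ : ∃ m, n = m + 1 := ⟨n - 1, by omega⟩
  rw [gfact_succ, gsum_eq_zero hq hn, mul_zero]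

lemma gb_n_eq_zero {n : ℕ} {q : ℂ} (hq : IsPrimitiveRoot q n) (hn : 2 ≤ n) {k : ℕ}
    (h0 : 0 < k) (hk : k < n) : gb q n k = 0 := by
  have h1 := gfact_mul_gb q n k (n - k) (by omega)
  rw [gfact_n_eq_zero hq hn] at h1
  have h2 := gfact_ne_zero hq hk
  have h3 := gfact_ne_zero hq (show n - k < n by omega)
  have := mul_eq_zero.mp h1
  rcases this with h | h
  · rcases mul_eq_zero.mp h with h' | h' <;> [exact absurd h' h2; exact absurd h' h3]
  · exact h

lemma qadd_pow_prim {n : ℕ} {q : ℂ} (hq : IsPrimitiveRoot q n) (hn : 2 ≤ n)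
    {A B : T} (h : B * A = q • (A * B)) : (A + B) ^ n = A ^ n + B ^ n := by
  rw [qadd_pow h n, Finset.sum_range_succ]
  have hzero : ∀ k ∈ Finset.range n, k ≠ 0 → gb q n k • (A ^ k * B ^ (n - k)) = 0 := by
    intro k hk h0
    rw [Finset.mem_range] at hk
    rw [gb_n_eq_zero hq hn (by omega) hk, zero_smul]
  rw [Finset.sum_eq_single_of_mem 0 (Finset.mem_range.mpr (by omega)) hzero]
  simp [add_comm]

end QBinom

section MoreAntipode

variable {R : Type*} {A : Type*} [CommRing R] [Ring A] [HopfAlgebra R A]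

lemma antipode_one' : HopfAlgebra.antipode (R := R) (1 : A) = 1 := by
  have h := HopfAlgebra.mul_antipode_rTensor_comul_apply (R := R) (A := A) (a := 1)
  rw [Bialgebra.comul_one, Algebra.TensorProduct.one_def] at h
  simpa using h

lemma antipode_pow' (x : A) (m : ℕ) :
    HopfAlgebra.antipode (R := R) (x ^ m) = (HopfAlgebra.antipode (R := R) x) ^ m := by
  induction m with
  | zero => simp [antipode_one']
  | succ m ih => rw [pow_succ, antipode_mul_rev, ih, pow_succ']

end MoreAntipode

open TensorProduct

/-- Let `q` be a primitive `n`th root of unity in `ℂ` with `n ≥ 2`. In the Hopf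
algebra `H` generated by `D₁, D₂, σ, σ⁻¹` subject to `D₁D₂ = D₂D₁`, `qσDᵢ = Dᵢσ`,
`σσ⁻¹ = σ⁻¹σ = 1`, with `Δ(D₁) = D₁⊗σ + 1⊗D₁`, `Δ(D₂) = D₂⊗1 + σ⊗D₂`, `Δ(σ) = σ⊗σ`,
`ε(D₁) = ε(D₂) = 0`, `ε(σ) = 1`, `S(D₁) = −D₁σ⁻¹`, `S(D₂) = −σ⁻¹D₂`, `S(σ) = σ⁻¹`,
the two-sided ideal `I` generated by `D₁ⁿ` and `D₂ⁿ` is a Hopf ideal: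
`Δ(I) ⊆ I⊗H + H⊗I`, `ε(I) = 0`, and `S(I) ⊆ I`. -/
theorem hopf_ideal_of_truncation
    (n : ℕ) (hn : 2 ≤ n) (q : ℂ) (hq : IsPrimitiveRoot q n)
    (H : Type*) [Ring H] [HopfAlgebra ℂ H]
    (D₁ D₂ s sinv : H)
    (hcomm : D₁ * D₂ = D₂ * D₁)
    (hs1 : q • (s * D₁) = D₁ * s)
    (hs2 : q • (s * D₂) = D₂ * s)
    (hsinv : s * sinv = 1) (hsinv' : sinv * s = 1)
    (hΔ1 : Coalgebra.comul (R := ℂ) D₁ = D₁ ⊗ₜ[ℂ] s + 1 ⊗ₜ[ℂ] D₁)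
    (hΔ2 : Coalgebra.comul (R := ℂ) D₂ = D₂ ⊗ₜ[ℂ] 1 + s ⊗ₜ[ℂ] D₂)
    (hΔs : Coalgebra.comul (R := ℂ) s = s ⊗ₜ[ℂ] s)
    (hε1 : Coalgebra.counit (R := ℂ) D₁ = 0)
    (hε2 : Coalgebra.counit (R := ℂ) D₂ = 0)
    (hεs : Coalgebra.counit (R := ℂ) s = 1)
    (hS1 : HopfAlgebra.antipode (R := ℂ) D₁ = -(D₁ * sinv))
    (hS2 : HopfAlgebra.antipode (R := ℂ) D₂ = -(sinv * D₂))
    (hSs : HopfAlgebra.antipode (R := ℂ) s = sinv)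
    -- `I` is the two-sided ideal generated by `D₁ⁿ` and `D₂ⁿ`:
    (I : Submodule ℂ H)
    (hI : I = Submodule.span ℂ {x : H | ∃ a b : H, x = a * D₁ ^ n * b ∨ x = a * D₂ ^ n * b}) :
    (∀ x ∈ I, Coalgebra.comul (R := ℂ) x ∈
      Submodule.span ℂ ({z : H ⊗[ℂ] H | ∃ a ∈ I, ∃ b : H, z = a ⊗ₜ[ℂ] b} ∪
        {z : H ⊗[ℂ] H | ∃ a : H, ∃ b ∈ I, z = a ⊗ₜ[ℂ] b})) ∧
    (∀ x ∈ I, Coalgebra.counit (R := ℂ) x = 0) ∧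
    (∀ x ∈ I, HopfAlgebra.antipode (R := ℂ) x ∈ I) := by
  have hn0 : n ≠ 0 := by omega
  have hq0 : q ≠ 0 := by
    intro h
    have := hq.pow_eq_one
    rw [h] at this
    simp [zero_pow hn0] at this
  -- membership of the generators
  have memD1 : D₁ ^ n ∈ I := by
    rw [hI]; exact Submodule.subset_span ⟨1, 1, Or.inl (by rw [one_mul, mul_one])⟩
  have memD2 : D₂ ^ n ∈ I := by
    rw [hI]; exact Submodule.subset_span ⟨1, 1, Or.inr (by rw [one_mul, mul_one])⟩
  -- I is a two-sided ideal
  have Ileft : ∀ (u : H), ∀ x ∈ I, u * x ∈ I := by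
    intro u x hx
    rw [hI] at hx ⊢
    induction hx using Submodule.span_induction with
    | mem x hx =>
      obtain ⟨a, b, h | h⟩ := hx <;> subst h
      · exact Submodule.subset_span ⟨u * a, b, Or.inl (by noncomm_ring)⟩
      · exact Submodule.subset_span ⟨u * a, b, Or.inr (by noncomm_ring)⟩
    | zero => rw [mul_zero]; exact zero_mem _
    | add x y hx hy ihx ihy => rw [mul_add]; exact add_mem ihx ihy
    | smul c x hx ih => rw [mul_smul_comm]; exact Submodule.smul_mem _ _ ih
  have Iright : ∀ (u : H), ∀ x ∈ I, x * u ∈ I := by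
    intro u x hx
    rw [hI] at hx ⊢
    induction hx using Submodule.span_induction with
    | mem x hx =>
      obtain ⟨a, b, h | h⟩ := hx <;> subst h
      · exact Submodule.subset_span ⟨a, b * u, Or.inl (by noncomm_ring)⟩
      · exact Submodule.subset_span ⟨a, b * u, Or.inr (by noncomm_ring)⟩
    | zero => rw [zero_mul]; exact zero_mem _
    | add x y hx hy ihx ihy => rw [add_mul]; exact add_mem ihx ihy
    | smul c x hx ih => rw [smul_mul_assoc]; exact Submodule.smul_mem _ _ ih
  -- commutation relations with sinv
  have hc1 : sinv * D₁ = q • (D₁ * sinv) := by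
    have h := congrArg (fun z => sinv * z * sinv) hs1
    simp only [mul_smul_comm, smul_mul_assoc] at h
    have e1 : sinv * (s * D₁) * sinv = D₁ * sinv := by rw [← mul_assoc, hsinv', one_mul]
    have e2 : sinv * (D₁ * s) * sinv = sinv * D₁ := by rw [mul_assoc, mul_assoc, hsinv, mul_one]
    rw [e1, e2] at h
    exact h.symm
  have hc2' : sinv * D₂ = q • (D₂ * sinv) := by
    have h := congrArg (fun z => sinv * z * sinv) hs2
    simp only [mul_smul_comm, smul_mul_assoc] at h
    have e1 : sinv * (s * D₂) * sinv = D₂ * sinv := by rw [← mul_assoc, hsinv', one_mul]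
    have e2 : sinv * (D₂ * s) * sinv = sinv * D₂ := by rw [mul_assoc, mul_assoc, hsinv, mul_one]
    rw [e1, e2] at h
    exact h.symm
  have hc2 : D₂ * sinv = q⁻¹ • (sinv * D₂) := by
    rw [hc2', smul_smul, inv_mul_cancel₀ hq0, one_smul]
  -- Part 2 : counit
  have part2 : ∀ x ∈ I, Coalgebra.counit (R := ℂ) x = 0 := by
    intro x hx
    rw [hI] at hx
    induction hx using Submodule.span_induction with
    | mem x hx =>
      obtain ⟨a, b, h | h⟩ := hx <;> subst h <;>
        rw [Bialgebra.counit_mul, Bialgebra.counit_mul, Bialgebra.counit_pow] <;>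
        [rw [hε1]; rw [hε2]] <;> rw [zero_pow hn0, mul_zero, zero_mul]
    | zero => exact map_zero _
    | add x y hx hy ihx ihy => rw [map_add, ihx, ihy, add_zero]
    | smul c x hx ih => rw [map_smul, ih, smul_zero]
  -- Part 3 : antipode
  have part3 : ∀ x ∈ I, HopfAlgebra.antipode (R := ℂ) x ∈ I := by
    intro x hx
    rw [hI] at hx
    induction hx using Submodule.span_induction with
    | mem x hx =>
      obtain ⟨a, b, h | h⟩ := hx <;> subst h
      · obtain ⟨d, hd⟩ := qmul_pow hc1 n
        rw [antipode_mul_rev, antipode_mul_rev, antipode_pow', hS1, neg_pow, hd]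
        refine Ileft _ _ ?_
        refine Iright _ _ ?_
        refine Ileft _ _ ?_
        exact Submodule.smul_mem _ _ (Iright _ _ memD1)
      · obtain ⟨d, hd⟩ := qmul_pow hc2 n
        rw [antipode_mul_rev, antipode_mul_rev, antipode_pow', hS2, neg_pow, hd]
        refine Ileft _ _ ?_
        refine Iright _ _ ?_
        refine Ileft _ _ ?_
        exact Submodule.smul_mem _ _ (Ileft _ _ memD2)
    | zero => rw [map_zero]; exact zero_mem _
    | add x y hx hy ihx ihy => rw [map_add]; exact add_mem ihx ihy
    | smul c x hx ih => rw [map_smul]; exact Submodule.smul_mem _ _ ih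
  -- Part 1 : comultiplication
  set U : Set (H ⊗[ℂ] H) := {z : H ⊗[ℂ] H | ∃ a ∈ I, ∃ b : H, z = a ⊗ₜ[ℂ] b} ∪
        {z : H ⊗[ℂ] H | ∃ a : H, ∃ b ∈ I, z = a ⊗ₜ[ℂ] b} with hU
  have Jleft : ∀ (u : H ⊗[ℂ] H), ∀ z ∈ Submodule.span ℂ U, u * z ∈ Submodule.span ℂ U := by
    intro u z hz
    induction hz using Submodule.span_induction with
    | mem z hz =>
      induction u using TensorProduct.induction_on with
      | zero => rw [zero_mul]; exact zero_mem _
      | tmul x y =>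
        rcases hz with ⟨a, haI, c, rfl⟩ | ⟨a, c, hcI, rfl⟩
        · rw [Algebra.TensorProduct.tmul_mul_tmul]
          exact Submodule.subset_span (Or.inl ⟨x * a, Ileft x a haI, y * c, rfl⟩)
        · rw [Algebra.TensorProduct.tmul_mul_tmul]
          exact Submodule.subset_span (Or.inr ⟨x * a, y * c, Ileft y c hcI, rfl⟩)
      | add u v ihu ihv => rw [add_mul]; exact add_mem ihu ihv
    | zero => rw [mul_zero]; exact zero_mem _
    | add x y hx hy ihx ihy => rw [mul_add]; exact add_mem ihx ihy
    | smul c x hx ih => rw [mul_smul_comm]; exact Submodule.smul_mem _ _ ih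
  have Jright : ∀ (u : H ⊗[ℂ] H), ∀ z ∈ Submodule.span ℂ U, z * u ∈ Submodule.span ℂ U := by
    intro u z hz
    induction hz using Submodule.span_induction with
    | mem z hz =>
      induction u using TensorProduct.induction_on with
      | zero => rw [mul_zero]; exact zero_mem _
      | tmul x y =>
        rcases hz with ⟨a, haI, c, rfl⟩ | ⟨a, c, hcI, rfl⟩
        · rw [Algebra.TensorProduct.tmul_mul_tmul]
          exact Submodule.subset_span (Or.inl ⟨a * x, Iright x a haI, c * y, rfl⟩)
        · rw [Algebra.TensorProduct.tmul_mul_tmul]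
          exact Submodule.subset_span (Or.inr ⟨a * x, c * y, Iright y c hcI, rfl⟩)
      | add u v ihu ihv => rw [mul_add]; exact add_mem ihu ihv
    | zero => rw [zero_mul]; exact zero_mem _
    | add x y hx hy ihx ihy => rw [add_mul]; exact add_mem ihx ihy
    | smul c x hx ih => rw [smul_mul_assoc]; exact Submodule.smul_mem _ _ ih
  -- comul of the generators
  have hcm1 : Coalgebra.comul (R := ℂ) (D₁ ^ n) =
      (D₁ ^ n) ⊗ₜ[ℂ] (s ^ n) + (1 : H) ⊗ₜ[ℂ] (D₁ ^ n) := by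
    have hA : ((1 : H) ⊗ₜ[ℂ] D₁) * (D₁ ⊗ₜ[ℂ] s) = q • ((D₁ ⊗ₜ[ℂ] s) * ((1 : H) ⊗ₜ[ℂ] D₁)) := by
      rw [Algebra.TensorProduct.tmul_mul_tmul, Algebra.TensorProduct.tmul_mul_tmul,
        one_mul, mul_one, ← hs1, tmul_smul]
    rw [Bialgebra.comul_pow, hΔ1, qadd_pow_prim hq hn hA, Algebra.TensorProduct.tmul_pow,
      Algebra.TensorProduct.tmul_pow, one_pow]
  have hcm2 : Coalgebra.comul (R := ℂ) (D₂ ^ n) =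
      (s ^ n) ⊗ₜ[ℂ] (D₂ ^ n) + (D₂ ^ n) ⊗ₜ[ℂ] (1 : H) := by
    have hA : ((D₂ ⊗ₜ[ℂ] (1 : H))) * (s ⊗ₜ[ℂ] D₂) = q • ((s ⊗ₜ[ℂ] D₂) * (D₂ ⊗ₜ[ℂ] (1 : H))) := by
      rw [Algebra.TensorProduct.tmul_mul_tmul, Algebra.TensorProduct.tmul_mul_tmul,
        one_mul, mul_one, ← hs2, smul_tmul']
    rw [Bialgebra.comul_pow, hΔ2, add_comm (D₂ ⊗ₜ[ℂ] (1 : H)), qadd_pow_prim hq hn hA,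
      Algebra.TensorProduct.tmul_pow, Algebra.TensorProduct.tmul_pow, one_pow]
  have part1 : ∀ x ∈ I, Coalgebra.comul (R := ℂ) x ∈ Submodule.span ℂ U := by
    intro x hx
    rw [hI] at hx
    induction hx using Submodule.span_induction with
    | mem x hx =>
      obtain ⟨a, b, h | h⟩ := hx <;> subst h
      · rw [Bialgebra.comul_mul, Bialgebra.comul_mul, hcm1, mul_add, add_mul]
        refine add_mem ?_ ?_
        · exact Jright _ _ (Jleft _ _ (Submodule.subset_span
            (Or.inl ⟨D₁ ^ n, memD1, s ^ n, rfl⟩)))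
        · exact Jright _ _ (Jleft _ _ (Submodule.subset_span
            (Or.inr ⟨1, D₁ ^ n, memD1, rfl⟩)))
      · rw [Bialgebra.comul_mul, Bialgebra.comul_mul, hcm2, mul_add, add_mul]
        refine add_mem ?_ ?_
        · exact Jright _ _ (Jleft _ _ (Submodule.subset_span
            (Or.inr ⟨s ^ n, D₂ ^ n, memD2, rfl⟩)))
        · exact Jright _ _ (Jleft _ _ (Submodule.subset_span
            (Or.inl ⟨D₂ ^ n, memD2, 1, rfl⟩)))
    | zero => rw [map_zero]; exact zero_mem _
    | add x y hx hy ihx ihy => rw [map_add]; exact add_mem ihx ihy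
    | smul c x hx ih => rw [map_smul]; exact Submodule.smul_mem _ _ ih
  exact ⟨part1, part2, part3⟩
end

section
/- Let V be a 3-dimensional ℂ-vector space with basis w₁, w₂, w₃ and let q be a primitive nth root of unity (n ≥ 2). Consider the quantum symmetric algebra S_q(V) = T(V)/(w₁w₂ − q w₂w₁, w₁w₃ − q w₃w₁, w₂w₃ − w₃w₂). Then the monomials w₁ⁱ w₂ʲ w₃ᵐ for i,j,m ∈ ℕ form a ℂ-basis of S_q(V). -/
/-- The defining relations of the quantum symmetric algebra `S_q(V)` of the motivational
example: `w₁w₂ = q w₂w₁`, `w₁w₃ = q w₃w₁`, `w₂w₃ = w₃w₂` (with `q₁₂ = q₁₃ = q`, `q₂₃ = 1`). -/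
inductive SqRel (q : ℂ) : FreeAlgebra ℂ (Fin 3) → FreeAlgebra ℂ (Fin 3) → Prop
  | r12 : SqRel q (FreeAlgebra.ι ℂ 0 * FreeAlgebra.ι ℂ 1) (q • (FreeAlgebra.ι ℂ 1 * FreeAlgebra.ι ℂ 0))
  | r13 : SqRel q (FreeAlgebra.ι ℂ 0 * FreeAlgebra.ι ℂ 2) (q • (FreeAlgebra.ι ℂ 2 * FreeAlgebra.ι ℂ 0))
  | r23 : SqRel q (FreeAlgebra.ι ℂ 1 * FreeAlgebra.ι ℂ 2) (FreeAlgebra.ι ℂ 2 * FreeAlgebra.ι ℂ 1)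

noncomputable section
namespace SqAux

abbrev M := (ℕ × ℕ × ℕ) →₀ ℂ

variable (q : ℂ)

def X : Module.End ℂ M :=
  Finsupp.lift M ℂ (ℕ × ℕ × ℕ) fun p => q ^ (p.2.1 + p.2.2) • Finsupp.single (p.1 + 1, p.2.1, p.2.2) 1

def Y : Module.End ℂ M :=
  Finsupp.lift M ℂ (ℕ × ℕ × ℕ) fun p => Finsupp.single (p.1, p.2.1 + 1, p.2.2) 1

def Z : Module.End ℂ M :=
  Finsupp.lift M ℂ (ℕ × ℕ × ℕ) fun p => Finsupp.single (p.1, p.2.1, p.2.2 + 1) 1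

@[simp] lemma X_single (p : ℕ × ℕ × ℕ) (c : ℂ) :
    X q (Finsupp.single p c) = (c * q ^ (p.2.1 + p.2.2)) • Finsupp.single (p.1 + 1, p.2.1, p.2.2) 1 := by
  simp [X, mul_smul]

@[simp] lemma Y_single (p : ℕ × ℕ × ℕ) (c : ℂ) :
    Y (Finsupp.single p c) = c • Finsupp.single (p.1, p.2.1 + 1, p.2.2) 1 := by
  simp [Y]

@[simp] lemma Z_single (p : ℕ × ℕ × ℕ) (c : ℂ) :
    Z (Finsupp.single p c) = c • Finsupp.single (p.1, p.2.1, p.2.2 + 1) 1 := by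
  simp [Z]

lemma rel12 : X q * Y = q • (Y * X q) := by
  refine Finsupp.lhom_ext fun p c => ?_
  simp only [Module.End.mul_apply, LinearMap.smul_apply, X_single, Y_single, map_smul, smul_smul]
  ring_nf

lemma rel13 : X q * Z = q • (Z * X q) := by
  refine Finsupp.lhom_ext fun p c => ?_
  simp only [Module.End.mul_apply, LinearMap.smul_apply, X_single, Z_single, map_smul, smul_smul]
  ring_nf

lemma rel23 : Y * Z = Z * Y := by
  refine Finsupp.lhom_ext fun p c => ?_
  simp only [Module.End.mul_apply, Y_single, Z_single, map_smul, smul_smul]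


/-- The representation of the free algebra. -/
def Phi : FreeAlgebra ℂ (Fin 3) →ₐ[ℂ] Module.End ℂ M :=
  FreeAlgebra.lift ℂ ![X q, Y, Z]

lemma Phi_rel : ∀ ⦃a b : FreeAlgebra ℂ (Fin 3)⦄, SqRel q a b → Phi q a = Phi q b := by
  intro a b h
  cases h with
  | r12 => simp [Phi, map_mul, map_smul, rel12]
  | r13 => simp [Phi, map_mul, map_smul, rel13]
  | r23 => simp [Phi, map_mul, rel23]

def psi : RingQuot (SqRel q) →ₐ[ℂ] Module.End ℂ M :=
  RingQuot.liftAlgHom ℂ ⟨Phi q, Phi_rel q⟩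

@[simp] lemma psi_x0 : psi q (RingQuot.mkAlgHom ℂ (SqRel q) (FreeAlgebra.ι ℂ 0)) = X q := by
  simp [psi, RingQuot.liftAlgHom_mkAlgHom_apply, Phi]

@[simp] lemma psi_x1 : psi q (RingQuot.mkAlgHom ℂ (SqRel q) (FreeAlgebra.ι ℂ 1)) = Y := by
  simp [psi, RingQuot.liftAlgHom_mkAlgHom_apply, Phi]

@[simp] lemma psi_x2 : psi q (RingQuot.mkAlgHom ℂ (SqRel q) (FreeAlgebra.ι ℂ 2)) = Z := by
  simp [psi, RingQuot.liftAlgHom_mkAlgHom_apply, Phi]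

lemma Z_pow (k : ℕ) (p : ℕ × ℕ × ℕ) :
    (Z ^ k) (Finsupp.single p 1) = Finsupp.single (p.1, p.2.1, p.2.2 + k) 1 := by
  induction k generalizing p with
  | zero => simp
  | succ k ih =>
    rw [pow_succ, Module.End.mul_apply, Z_single, one_smul, ih]
    ring_nf

lemma Y_pow (k : ℕ) (p : ℕ × ℕ × ℕ) :
    (Y ^ k) (Finsupp.single p 1) = Finsupp.single (p.1, p.2.1 + k, p.2.2) 1 := by
  induction k generalizing p with
  | zero => simp
  | succ k ih =>
    rw [pow_succ, Module.End.mul_apply, Y_single, one_smul, ih]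
    ring_nf

lemma X_pow (k : ℕ) (p : ℕ × ℕ × ℕ) :
    (X q ^ k) (Finsupp.single p 1) =
      q ^ (k * (p.2.1 + p.2.2)) • Finsupp.single (p.1 + k, p.2.1, p.2.2) 1 := by
  induction k generalizing p with
  | zero => simp
  | succ k ih =>
    rw [pow_succ, Module.End.mul_apply, X_single, one_mul, map_smul, ih, smul_smul, ← pow_add]
    have h1 : p.2.1 + p.2.2 + k * (p.2.1 + p.2.2) = (k + 1) * (p.2.1 + p.2.2) := by ring
    have h2 : p.1 + 1 + k = p.1 + (k + 1) := by omega
    rw [h1, h2]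


variable {q}

section quot
variable (q)

abbrev x0 : RingQuot (SqRel q) := RingQuot.mkAlgHom ℂ (SqRel q) (FreeAlgebra.ι ℂ 0)
abbrev x1 : RingQuot (SqRel q) := RingQuot.mkAlgHom ℂ (SqRel q) (FreeAlgebra.ι ℂ 1)
abbrev x2 : RingQuot (SqRel q) := RingQuot.mkAlgHom ℂ (SqRel q) (FreeAlgebra.ι ℂ 2)

def mon (p : ℕ × ℕ × ℕ) : RingQuot (SqRel q) := x0 q ^ p.1 * x1 q ^ p.2.1 * x2 q ^ p.2.2

lemma mon_eq (p : ℕ × ℕ × ℕ) :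
    mon q p = RingQuot.mkAlgHom ℂ (SqRel q)
      (FreeAlgebra.ι ℂ 0 ^ p.1 * FreeAlgebra.ι ℂ 1 ^ p.2.1 * FreeAlgebra.ι ℂ 2 ^ p.2.2) := by
  simp [mon, map_mul, map_pow]

lemma h01 : x0 q * x1 q = q • (x1 q * x0 q) := by
  rw [← map_mul, ← map_mul, ← map_smul]
  exact RingQuot.mkAlgHom_rel ℂ SqRel.r12

lemma h02 : x0 q * x2 q = q • (x2 q * x0 q) := by
  rw [← map_mul, ← map_mul, ← map_smul]
  exact RingQuot.mkAlgHom_rel ℂ SqRel.r13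

lemma h12 : x1 q * x2 q = x2 q * x1 q := by
  rw [← map_mul, ← map_mul]
  exact RingQuot.mkAlgHom_rel ℂ SqRel.r23

variable {q}
variable (hq0 : q ≠ 0)
include hq0

lemma h10 : x1 q * x0 q = q⁻¹ • (x0 q * x1 q) := by
  rw [h01, smul_smul, inv_mul_cancel₀ hq0, one_smul]

lemma h20 : x2 q * x0 q = q⁻¹ • (x0 q * x2 q) := by
  rw [h02, smul_smul, inv_mul_cancel₀ hq0, one_smul]

lemma h10_pow (a : ℕ) : x1 q * x0 q ^ a = (q⁻¹) ^ a • (x0 q ^ a * x1 q) := by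
  induction a with
  | zero => simp
  | succ a ih =>
    rw [pow_succ', ← mul_assoc, h10 hq0, smul_mul_assoc, mul_assoc, ih, mul_smul_comm,
      smul_smul, ← mul_assoc, ← pow_succ', pow_succ']

lemma h20_pow (a : ℕ) : x2 q * x0 q ^ a = (q⁻¹) ^ a • (x0 q ^ a * x2 q) := by
  induction a with
  | zero => simp
  | succ a ih =>
    rw [pow_succ', ← mul_assoc, h20 hq0, smul_mul_assoc, mul_assoc, ih, mul_smul_comm,
      smul_smul, ← mul_assoc, ← pow_succ', pow_succ']

omit hq0

lemma h21_pow (a : ℕ) : x2 q * x1 q ^ a = x1 q ^ a * x2 q := by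
  induction a with
  | zero => simp
  | succ a ih =>
    rw [pow_succ', ← mul_assoc, ← h12, mul_assoc, ih, ← mul_assoc, ← pow_succ']

lemma mulmon0 (p : ℕ × ℕ × ℕ) : x0 q * mon q p = mon q (p.1 + 1, p.2.1, p.2.2) := by
  simp only [mon, ← mul_assoc, ← pow_succ']

include hq0

lemma mulmon1 (p : ℕ × ℕ × ℕ) :
    x1 q * mon q p = (q⁻¹) ^ p.1 • mon q (p.1, p.2.1 + 1, p.2.2) := by
  simp only [mon]
  rw [← mul_assoc, ← mul_assoc, h10_pow hq0, smul_mul_assoc, smul_mul_assoc, mul_assoc (x0 q ^ p.1),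
    ← pow_succ']

lemma mulmon2 (p : ℕ × ℕ × ℕ) :
    x2 q * mon q p = (q⁻¹) ^ p.1 • mon q (p.1, p.2.1, p.2.2 + 1) := by
  simp only [mon]
  rw [← mul_assoc, ← mul_assoc, h20_pow hq0, smul_mul_assoc, smul_mul_assoc,
    mul_assoc (x0 q ^ p.1), h21_pow, ← mul_assoc, mul_assoc _ (x2 q) (x2 q ^ p.2.2), ← pow_succ']

end quot


section main
variable (q)

def ev : RingQuot (SqRel q) →ₗ[ℂ] M where
  toFun a := psi q a (Finsupp.single (0, 0, 0) 1)
  map_add' a b := by simp [map_add]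
  map_smul' c a := by simp [map_smul]

lemma ev_mon (p : ℕ × ℕ × ℕ) :
    ev q (mon q p) = q ^ (p.1 * (p.2.1 + p.2.2)) • Finsupp.single p 1 := by
  have h : psi q (mon q p) = X q ^ p.1 * Y ^ p.2.1 * Z ^ p.2.2 := by
    simp [mon, map_mul, map_pow]
  show psi q (mon q p) _ = _
  rw [h]
  simp only [Module.End.mul_apply, Z_pow, Y_pow, X_pow]
  norm_num

variable {q}

lemma mon_li (hq0 : q ≠ 0) : LinearIndependent ℂ (mon q) := by
  have hb : LinearIndependent ℂ (fun p : ℕ × ℕ × ℕ => Finsupp.single p (1 : ℂ)) := by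
    simpa using (Finsupp.basisSingleOne (R := ℂ) (ι := ℕ × ℕ × ℕ)).linearIndependent
  set u : (ℕ × ℕ × ℕ) → ℂˣ :=
    fun p => Units.mk0 (q ^ (p.1 * (p.2.1 + p.2.2))) (pow_ne_zero _ hq0) with hu
  have h2 := hb.units_smul u
  apply LinearIndependent.of_comp (ev q)
  convert h2 using 1
  funext p
  simp [ev_mon, hu, Units.smul_def]

lemma mon_span (hq0 : q ≠ 0) : ⊤ ≤ Submodule.span ℂ (Set.range (mon q)) := by
  set S := Submodule.span ℂ (Set.range (mon q)) with hS
  have hmem : ∀ p, mon q p ∈ S := fun p => Submodule.subset_span ⟨p, rfl⟩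
  have hgen : ∀ i : Fin 3, ∀ s ∈ S,
      RingQuot.mkAlgHom ℂ (SqRel q) (FreeAlgebra.ι ℂ i) * s ∈ S := by
    intro i s hs
    induction hs using Submodule.span_induction with
    | mem t ht =>
      obtain ⟨p, rfl⟩ := ht
      fin_cases i
      · show x0 q * mon q p ∈ S
        rw [mulmon0]; exact hmem _
      · show x1 q * mon q p ∈ S
        rw [mulmon1 hq0]; exact S.smul_mem _ (hmem _)
      · show x2 q * mon q p ∈ S
        rw [mulmon2 hq0]; exact S.smul_mem _ (hmem _)
    | zero => rw [mul_zero]; exact S.zero_mem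
    | add a b _ _ ha hb => rw [mul_add]; exact S.add_mem ha hb
    | smul c a _ ha => rw [mul_smul_comm]; exact S.smul_mem c ha
  have key : ∀ a : FreeAlgebra ℂ (Fin 3), ∀ s ∈ S,
      RingQuot.mkAlgHom ℂ (SqRel q) a * s ∈ S := by
    intro a
    induction a using FreeAlgebra.induction with
    | grade0 r =>
      intro s hs
      simpa [AlgHom.commutes, ← Algebra.smul_def] using S.smul_mem r hs
    | grade1 i => exact hgen i
    | mul a b ha hb =>
      intro s hs
      rw [map_mul, mul_assoc]
      exact ha _ (hb s hs)
    | add a b ha hb =>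
      intro s hs
      rw [map_add, add_mul]
      exact S.add_mem (ha s hs) (hb s hs)
  intro a _
  obtain ⟨b, rfl⟩ := RingQuot.mkAlgHom_surjective ℂ (SqRel q) a
  have h1 : (1 : RingQuot (SqRel q)) ∈ S := by
    simpa [mon] using hmem (0, 0, 0)
  simpa using key b 1 h1

end main

end SqAux

/-- Let `V` be 3-dimensional over `ℂ` with basis `w₁, w₂, w₃` and `q` a primitive
`n`th root of unity (`n ≥ 2`). In `S_q(V) = T(V)/(w₁w₂ − q w₂w₁, w₁w₃ − q w₃w₁, w₂w₃ − w₃w₂)`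
the monomials `w₁ⁱ w₂ʲ w₃ᵐ` (`i,j,m ∈ ℕ`) form a `ℂ`-basis. -/
theorem quantum_symmetric_algebra_monomial_basis
    (n : ℕ) (hn : 2 ≤ n) (q : ℂ) (hq : IsPrimitiveRoot q n) :
    ∃ B : Module.Basis (ℕ × ℕ × ℕ) ℂ (RingQuot (SqRel q)),
      ∀ i j m : ℕ, B (i, j, m) =
        RingQuot.mkAlgHom ℂ (SqRel q)
          (FreeAlgebra.ι ℂ 0 ^ i * FreeAlgebra.ι ℂ 1 ^ j * FreeAlgebra.ι ℂ 2 ^ m) := by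
  have hq0 : q ≠ 0 := by
    intro h
    have := hq.pow_eq_one
    rw [h] at this
    simp [zero_pow (by omega : n ≠ 0)] at this
  refine ⟨Module.Basis.mk (SqAux.mon_li hq0) (SqAux.mon_span hq0), ?_⟩
  intro i j m
  rw [Module.Basis.mk_apply, SqAux.mon_eq]
end
end

section
/- Let A = S_q(V)#G be as in the motivational example with dim V = 3, G = ⟨σ₁,σ₂ | σ₁ⁿ = σ₂ⁿ = 1, σ₁σ₂ = σ₂σ₁⟩ acting diagonally via σ₁(w₁) = qw₁, σ₁(w₂) = w₂, σ₁(w₃) = qw₃, σ₂(w₁) = w₁, σ₂(w₂) = qw₂, σ₂(w₃) = qw₃. Define k-linear maps on A by σ(w₁ⁱw₂ʲw₃ᵐ g) = qⁱ χ₁(g⁻¹) w₁ⁱw₂ʲw₃ᵐ g, D₁(w₁ⁱw₂ʲw₃ᵐ g) = (i)_q q^{j+m} χ₁(g⁻¹) w₁^{i−1}w₂ʲw₃ᵐ σ₂ g, D₂(w₁ⁱw₂ʲw₃ᵐ g) = (j)_{q⁻¹} qⁱ w₁ⁱw₂^{j−1}w₃^{m+1} σ₁σ₂⁻¹ g. Then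 D₁ D₂ = D₂ D₁ as linear maps on A. -/
/-- The underlying vector space of `S_q(V)#G` in the motivational example: it has basis
`{w₁ⁱ w₂ʲ w₃ᵐ g}` indexed by `(i,j,m) ∈ ℕ³` and `g = σ₁^a σ₂^b ∈ G = (ℤ/n)²`. -/
abbrev SmashSpace (n : ℕ) := (ℕ × ℕ × ℕ × (ZMod n × ZMod n)) →₀ ℂ

/-- The quantum integer `(m)_q = 1 + q + ⋯ + q^(m−1)`. -/
noncomputable def qInt (q : ℂ) (m : ℕ) : ℂ := ∑ i ∈ Finset.range m, q ^ i

/-- The character `χ₁ : G → ℂˣ` evaluated at `g⁻¹`, for `g = σ₁^a σ₂^b`: since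
`σ₁(w₁) = q w₁` and `σ₂(w₁) = w₁`, we have `χ₁(g) = q^a`, so `χ₁(g⁻¹) = q^((−a).val)`. -/
noncomputable def chi1inv (n : ℕ) (q : ℂ) (g : ZMod n × ZMod n) : ℂ := q ^ (-g.1).val

/-- `D₁` on basis elements: `D₁(w₁ⁱw₂ʲw₃ᵐ g) = (i)_q q^(j+m) χ₁(g⁻¹) w₁^(i−1)w₂ʲw₃ᵐ σ₂ g`
(a negative exponent is interpreted as `0`; indeed `(0)_q = 0`). -/
noncomputable def D1fun (n : ℕ) (q : ℂ) :
    ℕ × ℕ × ℕ × (ZMod n × ZMod n) → SmashSpace n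
  | (i, j, m, (a, b)) =>
      (qInt q i * q ^ (j + m) * chi1inv n q (a, b)) •
        Finsupp.single (i - 1, j, m, (a, b + 1)) 1

/-- `D₂` on basis elements: `D₂(w₁ⁱw₂ʲw₃ᵐ g) = (j)_{q⁻¹} qⁱ w₁ⁱw₂^(j−1)w₃^(m+1) σ₁σ₂⁻¹ g`. -/
noncomputable def D2fun (n : ℕ) (q : ℂ) :
    ℕ × ℕ × ℕ × (ZMod n × ZMod n) → SmashSpace n
  | (i, j, m, (a, b)) =>
      (qInt q⁻¹ j * q ^ i) • Finsupp.single (i, j - 1, m + 1, (a + 1, b - 1)) 1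

/-- `σ` on basis elements: `σ(w₁ⁱw₂ʲw₃ᵐ g) = qⁱ χ₁(g⁻¹) w₁ⁱw₂ʲw₃ᵐ g`. -/
noncomputable def sigmafun (n : ℕ) (q : ℂ) :
    ℕ × ℕ × ℕ × (ZMod n × ZMod n) → SmashSpace n
  | (i, j, m, (a, b)) =>
      (q ^ i * chi1inv n q (a, b)) • Finsupp.single (i, j, m, (a, b)) 1

/-- The `ℂ`-linear extension of a map defined on the monomial basis. -/
noncomputable def extend (n : ℕ)
    (f : ℕ × ℕ × ℕ × (ZMod n × ZMod n) → SmashSpace n) :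
    SmashSpace n →ₗ[ℂ] SmashSpace n :=
  Finsupp.lsum ℂ fun p => LinearMap.toSpanSingleton ℂ (SmashSpace n) (f p)

lemma extend_single (n : ℕ)
    (f : ℕ × ℕ × ℕ × (ZMod n × ZMod n) → SmashSpace n)
    (p : ℕ × ℕ × ℕ × (ZMod n × ZMod n)) (c : ℂ) :
    extend n f (Finsupp.single p c) = c • f p := by
  simp [extend, LinearMap.toSpanSingleton_apply]

/-- In the motivational example (`dim V = 3`, `q` a primitive `n`th root of unity,
`G = (ℤ/n)²` acting diagonally), the linear maps `D₁` and `D₂` defined on the basis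
`{w₁ⁱ w₂ʲ w₃ᵐ g}` by the stated formulas commute: `D₁ D₂ = D₂ D₁`. -/
theorem motivational_D1_D2_commute
    (n : ℕ) (hn : 2 ≤ n) (q : ℂ) (hq : IsPrimitiveRoot q n) :
    (extend n (D1fun n q)) ∘ₗ (extend n (D2fun n q)) =
      (extend n (D2fun n q)) ∘ₗ (extend n (D1fun n q)) := by
  haveI : NeZero n := ⟨by omega⟩
  haveI : Fact (1 < n) := ⟨by omega⟩
  have hqn : q ^ n = 1 := hq.pow_eq_one
  have hmod : ∀ k : ℕ, q ^ (k % n) = q ^ k := by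
    intro k
    conv_rhs => rw [← Nat.mod_add_div k n]
    rw [pow_add, pow_mul, hqn, one_pow, mul_one]
  have hstep : ∀ x : ZMod n, q ^ ((x + 1 : ZMod n)).val = q ^ x.val * q := by
    intro x
    rw [ZMod.val_add, ZMod.val_one, hmod, pow_succ]
  apply Finsupp.lhom_ext
  rintro ⟨i, j, m, a, b⟩ c
  simp only [LinearMap.comp_apply, extend_single, one_smul, map_smul]
  rcases j with _ | j
  · simp only [D1fun, D2fun, qInt, Finset.range_zero, Finset.sum_empty, zero_mul,
      zero_smul, map_zero, smul_zero, map_smul, extend_single, mul_zero, smul_smul,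
      Nat.zero_sub]
  rcases i with _ | i
  · simp only [D1fun, D2fun, qInt, Finset.range_zero, Finset.sum_empty, zero_mul,
      zero_smul, map_zero, smul_zero, map_smul, extend_single, mul_zero, smul_smul,
      Nat.zero_sub, Nat.add_sub_cancel]
  · simp only [D1fun, D2fun, map_smul, extend_single, smul_smul, Nat.add_sub_cancel,
      sub_add_cancel, add_sub_cancel_right]
    congr 1
    simp only [chi1inv]
    have key : (q : ℂ) ^ (-(a : ZMod n)).val = q ^ (-(a + 1) : ZMod n).val * q := by
      have := hstep (-(a + 1))
      rw [← this]; congr 1; ring_nf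
    rw [key]
    ring_nf
end

section
/- Let A be an associative algebra over k[[t]]-coefficients A[[t]] with new multiplication a*b = ab + t·D₁(a)D₂(b), where σ is an automorphism of A, D₁ is a (σ,1)-skew derivation, D₂ is a (1,σ)-skew derivation, D₁D₂ = D₂D₁, (−1)·σD᷉ᵢ = Dᵢσ (i.e. q = −1), and D₁² = D₂² = 0. Then * is associative. -/
open PowerSeries in
private lemma cw_mul_left {k A : Type*} [Field k] [Ring A] [Algebra k A]
    (s : A → A) (D : A →ₗ[k] A) (hD : ∀ a b : A, D (a * b) = D a * s b + a * D b)
    (f g : PowerSeries A) :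
    (mk fun i => D (coeff i (f * g))) =
      (mk fun i => D (coeff i f)) * (mk fun i => s (coeff i g))
        + f * (mk fun i => D (coeff i g)) := by
  ext n
  simp [coeff_mul, map_sum, hD, Finset.sum_add_distrib]

open PowerSeries in
private lemma cw_mul_right {k A : Type*} [Field k] [Ring A] [Algebra k A]
    (s : A → A) (D : A →ₗ[k] A) (hD : ∀ a b : A, D (a * b) = D a * b + s a * D b)
    (f g : PowerSeries A) :
    (mk fun i => D (coeff i (f * g))) =
      (mk fun i => D (coeff i f)) * g
        + (mk fun i => s (coeff i f)) * (mk fun i => D (coeff i g)) := by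
  ext n
  simp [coeff_mul, map_sum, hD, Finset.sum_add_distrib]

open PowerSeries in
private lemma cw_X_mul {k A : Type*} [Field k] [Ring A] [Algebra k A]
    (D : A →ₗ[k] A) (f : PowerSeries A) :
    (mk fun i => D (coeff i (X * f))) = X * mk fun i => D (coeff i f) := by
  ext n
  cases n with
  | zero => simp
  | succ m => simp [coeff_succ_X_mul]

/-- Let `A` be an associative algebra, `σ` an automorphism, `D₁` a `(σ,1)`-skew
derivation, `D₂` a `(1,σ)`-skew derivation with `D₁D₂ = D₂D₁`, `−σDᵢ = Dᵢσ` (the case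
`q = −1`), and `D₁² = D₂² = 0`. Then the multiplication `a*b = ab + t·D₁(a)D₂(b)` on `A[[t]]`
(extended `t`-linearly) is associative. -/
theorem deformed_multiplication_associative
    (k : Type*) [Field k] [CharZero k]
    (A : Type*) [Ring A] [Algebra k A]
    (σ : A ≃ₐ[k] A) (D₁ D₂ : A →ₗ[k] A)
    (hD₁ : ∀ a b : A, D₁ (a * b) = D₁ a * σ b + a * D₁ b)
    (hD₂ : ∀ a b : A, D₂ (a * b) = D₂ a * b + σ a * D₂ b)
    (hcomm : ∀ a : A, D₁ (D₂ a) = D₂ (D₁ a))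
    (hq1 : ∀ a : A, -(σ (D₁ a)) = D₁ (σ a))
    (hq2 : ∀ a : A, -(σ (D₂ a)) = D₂ (σ a))
    (hsq1 : ∀ a : A, D₁ (D₁ a) = 0)
    (hsq2 : ∀ a : A, D₂ (D₂ a) = 0) :
    let star : PowerSeries A → PowerSeries A → PowerSeries A := fun f g =>
      f * g + PowerSeries.X *
        ((PowerSeries.mk fun i => D₁ (PowerSeries.coeff i f)) *
          (PowerSeries.mk fun i => D₂ (PowerSeries.coeff i g)))
    ∀ f g h : PowerSeries A, star (star f g) h = star f (star g h) := by
  intro star f g h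
  open PowerSeries in
  show (f * g + X * _) * h + X * _ = f * (g * h + X * _) + X * _
  have d1add : ∀ p q : PowerSeries A,
      (mk fun i => D₁ (coeff i (p + q)))
        = (mk fun i => D₁ (coeff i p)) + mk fun i => D₁ (coeff i q) := by
    intro p q; ext n; simp
  have d2add : ∀ p q : PowerSeries A,
      (mk fun i => D₂ (coeff i (p + q)))
        = (mk fun i => D₂ (coeff i p)) + mk fun i => D₂ (coeff i q) := by
    intro p q; ext n; simp
  have d1sq : ∀ p : PowerSeries A,
      (mk fun i => D₁ (coeff i (mk fun j => D₁ (coeff j p)))) = 0 := by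
    intro p; ext n; simp [hsq1]
  have d2sq : ∀ p : PowerSeries A,
      (mk fun i => D₂ (coeff i (mk fun j => D₂ (coeff j p)))) = 0 := by
    intro p; ext n; simp [hsq2]
  have dcomm : ∀ p : PowerSeries A,
      (mk fun i => D₁ (coeff i (mk fun j => D₂ (coeff j p))))
        = mk fun i => D₂ (coeff i (mk fun j => D₁ (coeff j p))) := by
    intro p; ext n; simp [hcomm]
  have hX : ∀ p : PowerSeries A, X * p = p * X := by
    intro p; exact (commute_X p).symm
  rw [d1add, d2add, cw_mul_left (fun a => σ a) D₁ hD₁,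
    cw_mul_right (fun a => σ a) D₂ hD₂, cw_X_mul, cw_X_mul,
    cw_mul_left (fun a => σ a) D₁ hD₁, cw_mul_right (fun a => σ a) D₂ hD₂,
    d1sq, d2sq, dcomm]
  simp only [coeff_mk, zero_mul, mul_zero, zero_add, add_zero, mul_add, add_mul, mul_assoc, hX]
  abel
end

section
/- Let A be an associative unital k-algebra, σ an algebra automorphism, D₁ a (σ,1)-skew derivation and D₂ a (1,σ)-skew derivation with D₁D₂ = D₂D₁ and qσDᵢ = Dᵢσ for i = 1,2, and assume q is a primitive nth root of unity with D₁ⁿ = D₂ⁿ = 0. Then the map μ₁ = m∘(D₁⊗D₂) : A⊗A → A is a Hochschild 2-cocycle: a·μ₁(b⊗c) − μ₁(ab⊗c) + μ₁(a⊗bc) − μ₁(a⊗b)·c = 0 for all a,b,c ∈ A. -/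
/-- Let `A` be an associative unital `k`-algebra, `σ` an algebra automorphism,
`D₁` a `(σ,1)`-skew derivation and `D₂` a `(1,σ)`-skew derivation with `D₁D₂ = D₂D₁` and
`qσDᵢ = Dᵢσ`, where `q` is a primitive `n`th root of unity and `D₁ⁿ = D₂ⁿ = 0`. Then
`μ₁ = m∘(D₁⊗D₂)` is a Hochschild 2-cocycle:
`a·μ₁(b⊗c) − μ₁(ab⊗c) + μ₁(a⊗bc) − μ₁(a⊗b)·c = 0`. -/
theorem infinitesimal_is_hochschild_two_cocycle
    (k : Type*) [Field k] [CharZero k]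
    (n : ℕ) (hn : 2 ≤ n) (q : k) (hq : IsPrimitiveRoot q n)
    (A : Type*) [Ring A] [Algebra k A]
    (σ : A ≃ₐ[k] A) (D₁ D₂ : Module.End k A)
    (hD₁ : ∀ a b : A, D₁ (a * b) = D₁ a * σ b + a * D₁ b)
    (hD₂ : ∀ a b : A, D₂ (a * b) = D₂ a * b + σ a * D₂ b)
    (hcomm : D₁ * D₂ = D₂ * D₁)
    (hq1 : q • (σ.toLinearMap ∘ₗ (D₁ : A →ₗ[k] A)) = (D₁ : A →ₗ[k] A) ∘ₗ σ.toLinearMap)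
    (hq2 : q • (σ.toLinearMap ∘ₗ (D₂ : A →ₗ[k] A)) = (D₂ : A →ₗ[k] A) ∘ₗ σ.toLinearMap)
    (hn1 : D₁ ^ n = 0) (hn2 : D₂ ^ n = 0) :
    ∀ a b c : A,
      a * (D₁ b * D₂ c) - D₁ (a * b) * D₂ c + D₁ a * D₂ (b * c) - (D₁ a * D₂ b) * c = 0 := by
  intro a b c
  rw [hD₁ a b, hD₂ b c]
  noncomm_ring
end
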